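/- arXiv:2004.11432 — 4 statements merged into one kernel-verified Lean document; each statement's English description precedes it below -/
import Mathlib

section
/- Let f₀ be μ-strongly convex and f₁, f₂ convex on ℝ^p, all real-valued. Suppose x⁺ minimizes f₀(x) + f₂(x) + ⟨g₁, x⟩ where g₁ ∈ ∂f₁(x₁), and g₂ ∈ ∂f₂(x⁺) satisfies 0 ∈ ∂f₀(x⁺) + g₁ + g₂. Then x⁺ also minimizes the function f₀(x) + [f₂(x⁺) + ⟨g₂, x − x⁺⟩] + [f₁(x₁) + ⟨g₁, x − x₁⟩], and the two problems have the same optimal value. -/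
open scoped RealInnerProductSpace

/-- after relinearizing `f₂` at the new minimizer with the
optimality-condition subgradient, the same point is still a minimizer and the
optimal value is unchanged. -/
theorem stmt_4 (p : ℕ) (μ : ℝ) (hμ : 0 < μ)
    (f₀ f₁ f₂ : EuclideanSpace ℝ (Fin p) → ℝ)
    (hf₀ : ConvexOn ℝ Set.univ (fun x => f₀ x - μ / 2 * ‖x‖ ^ 2))
    (hf₁ : ConvexOn ℝ Set.univ f₁) (hf₂ : ConvexOn ℝ Set.univ f₂)
    (x₁ g₁ xp g₂ : EuclideanSpace ℝ (Fin p))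
    (hg₁ : ∀ x, f₁ x₁ + ⟪g₁, x - x₁⟫ ≤ f₁ x)
    (hxp : ∀ x, f₀ xp + f₂ xp + (f₁ x₁ + ⟪g₁, xp - x₁⟫) ≤
      f₀ x + f₂ x + (f₁ x₁ + ⟪g₁, x - x₁⟫))
    (hg₂ : ∀ x, f₂ xp + ⟪g₂, x - xp⟫ ≤ f₂ x)
    (hopt : ∀ x, f₀ xp + ⟪-(g₁ + g₂), x - xp⟫ ≤ f₀ x) :
    (∀ x, f₀ xp + (f₂ xp + ⟪g₂, xp - xp⟫) + (f₁ x₁ + ⟪g₁, xp - x₁⟫) ≤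
        f₀ x + (f₂ xp + ⟪g₂, x - xp⟫) + (f₁ x₁ + ⟪g₁, x - x₁⟫)) ∧
      f₀ xp + (f₂ xp + ⟪g₂, xp - xp⟫) + (f₁ x₁ + ⟪g₁, xp - x₁⟫) =
        f₀ xp + f₂ xp + (f₁ x₁ + ⟪g₁, xp - x₁⟫) := by
  have key : ∀ x, f₀ xp + (f₂ xp + ⟪g₂, xp - xp⟫) + (f₁ x₁ + ⟪g₁, xp - x₁⟫) ≤
      f₀ x + (f₂ xp + ⟪g₂, x - xp⟫) + (f₁ x₁ + ⟪g₁, x - x₁⟫) := by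
    intro x
    have h := hopt x
    simp only [inner_sub_right, inner_add_left, inner_neg_left] at *
    linarith
  exact ⟨key, by simp⟩
end

section
/- Let f₀ be μ-strongly convex and f₁,…,fₙ convex on ℝ^p. Consider two successive surrogate functions f^(t)(x) = f₀(x) + f_{j}(x) + Σ_{i≠j}[fᵢ(xᵢ) + ⟨gᵢ, x − xᵢ⟩] and f^(t+1)(x) = f₀(x) + f_{j'}(x) + Σ_{i≠j'}[fᵢ(xᵢ') + ⟨gᵢ', x − xᵢ'⟩] obtained by one step of the StochaLM update (relinearizing f_j at its new minimizer with the optimality-condition subgradient, keeping other anchors fixed). Then inf f^(t) ≤ inf f^(t+1). -/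
open scoped RealInnerProductSpace

/-- one StochaLM step does not decrease the infimum of the
surrogate. -/
theorem stmt_5 (p n : ℕ) (μ : ℝ) (hμ : 0 < μ)
    (f₀ : EuclideanSpace ℝ (Fin p) → ℝ)
    (f : Fin n → EuclideanSpace ℝ (Fin p) → ℝ)
    (hf₀ : ConvexOn ℝ Set.univ (fun x => f₀ x - μ / 2 * ‖x‖ ^ 2))
    (hf : ∀ i, ConvexOn ℝ Set.univ (f i))
    (j j' : Fin n)
    (x g x' g' : Fin n → EuclideanSpace ℝ (Fin p))
    (hg : ∀ i z, f i (x i) + ⟪g i, z - x i⟫ ≤ f i z)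
    -- `x' j` minimizes the surrogate `f^(t)`
    (hmin : ∀ z,
      f₀ (x' j) + f j (x' j) + ∑ i ∈ Finset.univ.erase j,
          (f i (x i) + ⟪g i, x' j - x i⟫) ≤
        f₀ z + f j z + ∑ i ∈ Finset.univ.erase j, (f i (x i) + ⟪g i, z - x i⟫))
    -- `g' j` is a subgradient of `f j` at `x' j` ...
    (hg'j : ∀ z, f j (x' j) + ⟪g' j, z - x' j⟫ ≤ f j z)
    -- ... satisfying the first-order optimality condition
    (hopt : ∀ z,
      f₀ (x' j) + ⟪-(g' j + ∑ i ∈ Finset.univ.erase j, g i), z - x' j⟫ ≤ f₀ z)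
    -- the remaining anchors and subgradients are unchanged
    (hx' : ∀ i, i ≠ j → x' i = x i) (hg' : ∀ i, i ≠ j → g' i = g i) :
    (⨅ z : EuclideanSpace ℝ (Fin p),
        (f₀ z + f j z + ∑ i ∈ Finset.univ.erase j, (f i (x i) + ⟪g i, z - x i⟫))) ≤
      ⨅ z : EuclideanSpace ℝ (Fin p),
        (f₀ z + f j' z + ∑ i ∈ Finset.univ.erase j',
          (f i (x' i) + ⟪g' i, z - x' i⟫)) := by

  classical
  set m : ℝ := f₀ (x' j) + f j (x' j) + ∑ i ∈ Finset.univ.erase j,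
      (f i (x i) + ⟪g i, x' j - x i⟫) with hm
  have key : ∀ z, m ≤ f₀ z + f j' z + ∑ i ∈ Finset.univ.erase j',
      (f i (x' i) + ⟪g' i, z - x' i⟫) := by
    intro z
    have hLle : f j' (x' j') + ⟪g' j', z - x' j'⟫ ≤ f j' z := by
      by_cases h : j' = j
      · subst h; exact hg'j z
      · rw [hx' j' h, hg' j' h]; exact hg j' z
    have hsplit : (f j' (x' j') + ⟪g' j', z - x' j'⟫) +
        ∑ i ∈ Finset.univ.erase j', (f i (x' i) + ⟪g' i, z - x' i⟫) =
        ∑ i, (f i (x' i) + ⟪g' i, z - x' i⟫) :=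
      Finset.add_sum_erase _ (fun i => f i (x' i) + ⟪g' i, z - x' i⟫) (Finset.mem_univ _)
    have hsplit2 : ∑ i, (f i (x' i) + ⟪g' i, z - x' i⟫) =
        (f j (x' j) + ⟪g' j, z - x' j⟫) +
        ∑ i ∈ Finset.univ.erase j, (f i (x' i) + ⟪g' i, z - x' i⟫) :=
      (Finset.add_sum_erase _ (fun i => f i (x' i) + ⟪g' i, z - x' i⟫) (Finset.mem_univ j)).symm
    have hcongr : ∑ i ∈ Finset.univ.erase j, (f i (x' i) + ⟪g' i, z - x' i⟫) =
        ∑ i ∈ Finset.univ.erase j, (f i (x i) + ⟪g i, z - x i⟫) := by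
      refine Finset.sum_congr rfl fun i hi => ?_
      have h := Finset.ne_of_mem_erase hi
      rw [hx' i h, hg' i h]
    have hsum : ∑ i ∈ Finset.univ.erase j, ⟪g i, z - x i⟫ -
        ∑ i ∈ Finset.univ.erase j, ⟪g i, x' j - x i⟫ =
        ⟪∑ i ∈ Finset.univ.erase j, g i, z - x' j⟫ := by
      rw [← Finset.sum_sub_distrib, sum_inner]
      refine Finset.sum_congr rfl fun i _ => ?_
      rw [← inner_sub_right, sub_sub_sub_cancel_right]
    have hopt' := hopt z
    rw [inner_neg_left, inner_add_left] at hopt'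
    have e1 : ∑ i ∈ Finset.univ.erase j, (f i (x i) + ⟪g i, z - x i⟫) =
        ∑ i ∈ Finset.univ.erase j, f i (x i) +
        ∑ i ∈ Finset.univ.erase j, ⟪g i, z - x i⟫ :=
      Finset.sum_add_distrib
    have e2 : ∑ i ∈ Finset.univ.erase j, (f i (x i) + ⟪g i, x' j - x i⟫) =
        ∑ i ∈ Finset.univ.erase j, f i (x i) +
        ∑ i ∈ Finset.univ.erase j, ⟪g i, x' j - x i⟫ :=
      Finset.sum_add_distrib
    have hmid : m ≤ f₀ z + (f j' (x' j') + ⟪g' j', z - x' j'⟫) +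
        ∑ i ∈ Finset.univ.erase j', (f i (x' i) + ⟪g' i, z - x' i⟫) := by
      rw [add_assoc, hsplit, hsplit2, hcongr, hm, e1, e2]
      linarith [hsum, hopt']
    linarith [hmid, hLle]
  have hbdd : BddBelow (Set.range fun z : EuclideanSpace ℝ (Fin p) =>
      f₀ z + f j z + ∑ i ∈ Finset.univ.erase j, (f i (x i) + ⟪g i, z - x i⟫)) :=
    ⟨m, by rintro _ ⟨z, rfl⟩; exact hmin z⟩
  calc (⨅ z : EuclideanSpace ℝ (Fin p),
        (f₀ z + f j z + ∑ i ∈ Finset.univ.erase j, (f i (x i) + ⟪g i, z - x i⟫)))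
      ≤ f₀ (x' j) + f j (x' j) + ∑ i ∈ Finset.univ.erase j,
          (f i (x i) + ⟪g i, x' j - x i⟫) := ciInf_le hbdd (x' j)
    _ ≤ ⨅ z : EuclideanSpace ℝ (Fin p),
        (f₀ z + f j' z + ∑ i ∈ Finset.univ.erase j',
          (f i (x' i) + ⟪g' i, z - x' i⟫)) := le_ciInf key
end

section
/- Let f₀ be μ-strongly convex and f₁,…,fₙ convex, all real-valued and continuous on ℝ^p. Suppose sequences x₀^(t), x₁^(t), …, xₙ^(t) all converge to a common limit x^∞, the subgradients gᵢ^(t) ∈ ∂fᵢ(xᵢ^(t)) are bounded, and for each t, f₀(x₀^(t)) + Σᵢ [fᵢ(xᵢ^(t)) + ⟨gᵢ^(t), x₀^(t) − xᵢ^(t)⟩] ≤ min F, where F = f₀ + Σᵢ fᵢ. Then x^∞ is the (unique) minimizer of F. -/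
open scoped RealInnerProductSpace

/-- if all the iterates converge to a common limit, the
subgradients are bounded, and the surrogate values stay below `min F`, then the
common limit is the (unique) minimizer of `F`. -/
theorem stmt_8 (p n : ℕ) (μ : ℝ) (hμ : 0 < μ)
    (f₀ : EuclideanSpace ℝ (Fin p) → ℝ)
    (f : Fin n → EuclideanSpace ℝ (Fin p) → ℝ)
    (hf₀ : ConvexOn ℝ Set.univ (fun x => f₀ x - μ / 2 * ‖x‖ ^ 2))
    (hf₀c : Continuous f₀)
    (hf : ∀ i, ConvexOn ℝ Set.univ (f i)) (hfc : ∀ i, Continuous (f i))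
    (xstar : EuclideanSpace ℝ (Fin p))
    (hxstar : ∀ x, f₀ xstar + ∑ i, f i xstar ≤ f₀ x + ∑ i, f i x)
    (x0 : ℕ → EuclideanSpace ℝ (Fin p))
    (xs g : Fin n → ℕ → EuclideanSpace ℝ (Fin p))
    (xinf : EuclideanSpace ℝ (Fin p))
    (hx0 : Filter.Tendsto x0 Filter.atTop (nhds xinf))
    (hxs : ∀ i, Filter.Tendsto (xs i) Filter.atTop (nhds xinf))
    (hg : ∀ i t z, f i (xs i t) + ⟪g i t, z - xs i t⟫ ≤ f i z)
    (hgb : ∃ M : ℝ, ∀ i t, ‖g i t‖ ≤ M)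
    (hval : ∀ t, f₀ (x0 t) + ∑ i, (f i (xs i t) + ⟪g i t, x0 t - xs i t⟫) ≤
      f₀ xstar + ∑ i, f i xstar) :
    xinf = xstar := by
  classical
  obtain ⟨M, hM⟩ := hgb
  -- the surrogate values converge to F xinf
  have hten : Filter.Tendsto
      (fun t => f₀ (x0 t) + ∑ i, (f i (xs i t) + ⟪g i t, x0 t - xs i t⟫))
      Filter.atTop (nhds (f₀ xinf + ∑ i, f i xinf)) := by
    have h0 : Filter.Tendsto (fun t => f₀ (x0 t)) Filter.atTop (nhds (f₀ xinf)) :=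
      (hf₀c.tendsto xinf).comp hx0
    have hsum : Filter.Tendsto
        (fun t => ∑ i, (f i (xs i t) + ⟪g i t, x0 t - xs i t⟫))
        Filter.atTop (nhds (∑ i, f i xinf)) := by
      have : (∑ i, f i xinf) = ∑ i : Fin n, (f i xinf + 0) := by simp
      rw [this]
      refine tendsto_finset_sum _ (fun i _ => ?_)
      have hdi : Filter.Tendsto (fun t => x0 t - xs i t) Filter.atTop (nhds 0) := by
        simpa using hx0.sub (hxs i)
      have hinner : Filter.Tendsto (fun t => ⟪g i t, x0 t - xs i t⟫)
          Filter.atTop (nhds 0) := by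
        have h1 : Filter.Tendsto (fun t => M * ‖x0 t - xs i t‖) Filter.atTop (nhds 0) := by
          have h2 : Filter.Tendsto (fun t => ‖x0 t - xs i t‖) Filter.atTop (nhds 0) := by
            simpa using hdi.norm
          simpa using h2.const_mul M
        exact squeeze_zero_norm (fun t => (norm_inner_le_norm _ _).trans
          (mul_le_mul_of_nonneg_right (hM i t) (norm_nonneg _))) h1
      exact (((hfc i).tendsto xinf).comp (hxs i)).add hinner
    exact h0.add hsum
  have hle : f₀ xinf + ∑ i, f i xinf ≤ f₀ xstar + ∑ i, f i xstar :=
    le_of_tendsto hten (Filter.Eventually.of_forall hval)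
  -- F is strictly convex
  have hsc : StrongConvexOn Set.univ μ f₀ := strongConvexOn_iff_convex.2 hf₀
  have hsum : ∀ s : Finset (Fin n), ConvexOn ℝ Set.univ (fun x => ∑ i ∈ s, f i x) := by
    intro s
    induction s using Finset.induction with
    | empty => simpa using convexOn_const (0 : ℝ) convex_univ
    | insert _ _ hi ih =>
      simp only [Finset.sum_insert hi]; exact (hf _).add ih
  have hF : StrictConvexOn ℝ Set.univ (fun x => f₀ x + ∑ i, f i x) :=
    (hsc.strictConvexOn hμ).add_convexOn (hsum Finset.univ)
  have hminf : IsMinOn (fun x => f₀ x + ∑ i, f i x) Set.univ xinf := by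
    intro y _
    exact le_trans hle (hxstar y)
  have hmins : IsMinOn (fun x => f₀ x + ∑ i, f i x) Set.univ xstar := by
    intro y _
    exact hxstar y
  exact hF.eq_of_isMinOn hminf hmins (Set.mem_univ _) (Set.mem_univ _)
end

section
/- Let f₀ be μ-strongly convex and f₁,…,fₙ convex on ℝ^p, all real-valued. Fix anchors xᵢ and subgradients gᵢ ∈ ∂fᵢ(xᵢ), and let x⁺ be the minimizer of f^(t)(x) = f₀(x) + f_j(x) + Σ_{i≠j}[fᵢ(xᵢ) + ⟨gᵢ, x − xᵢ⟩]. Then (μ/2)‖x⁺ − x*‖² ≤ F(x*) − f^(t)(x⁺), where x* is the minimizer of F = f₀ + Σᵢ fᵢ. In particular the surrogate minimizers remain within a ball around x* controlled by the surrogate gap. -/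
open scoped RealInnerProductSpace

set_option maxHeartbeats 1000000

/-- the surrogate minimizer stays in a ball around `x*`
controlled by the surrogate gap. -/
theorem stmt_14 (p n : ℕ) (μ : ℝ) (hμ : 0 < μ)
    (f₀ : EuclideanSpace ℝ (Fin p) → ℝ)
    (f : Fin n → EuclideanSpace ℝ (Fin p) → ℝ)
    (hf₀ : ConvexOn ℝ Set.univ (fun x => f₀ x - μ / 2 * ‖x‖ ^ 2))
    (hf : ∀ i, ConvexOn ℝ Set.univ (f i))
    (j : Fin n) (xa g : Fin n → EuclideanSpace ℝ (Fin p))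
    (hg : ∀ i z, f i (xa i) + ⟪g i, z - xa i⟫ ≤ f i z)
    (xstar : EuclideanSpace ℝ (Fin p))
    (hxstar : ∀ x, f₀ xstar + ∑ i, f i xstar ≤ f₀ x + ∑ i, f i x)
    (xp : EuclideanSpace ℝ (Fin p))
    (hxp : ∀ z,
      f₀ xp + f j xp + ∑ i ∈ Finset.univ.erase j, (f i (xa i) + ⟪g i, xp - xa i⟫) ≤
        f₀ z + f j z + ∑ i ∈ Finset.univ.erase j, (f i (xa i) + ⟪g i, z - xa i⟫)) :
    μ / 2 * ‖xp - xstar‖ ^ 2 ≤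
      (f₀ xstar + ∑ i, f i xstar) -
        (f₀ xp + f j xp +
          ∑ i ∈ Finset.univ.erase j, (f i (xa i) + ⟪g i, xp - xa i⟫)) := by
  set Sp : ℝ := ∑ i ∈ Finset.univ.erase j, (f i (xa i) + ⟪g i, xp - xa i⟫) with hSp
  set Ss : ℝ := ∑ i ∈ Finset.univ.erase j, (f i (xa i) + ⟪g i, xstar - xa i⟫) with hSs
  -- Step A: the surrogate underestimates F at xstar
  have hA : f₀ xstar + f j xstar + Ss ≤ f₀ xstar + ∑ i, f i xstar := by
    have h1 : Ss ≤ ∑ i ∈ Finset.univ.erase j, f i xstar :=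
      Finset.sum_le_sum fun i _ => hg i xstar
    have h2 : f j xstar + ∑ i ∈ Finset.univ.erase j, f i xstar = ∑ i, f i xstar :=
      Finset.add_sum_erase _ (fun i => f i xstar) (Finset.mem_univ j)
    linarith
  -- Step B: strong-convexity growth at the surrogate minimizer
  have hB : μ / 2 * ‖xp - xstar‖ ^ 2 ≤
      (f₀ xstar + f j xstar + Ss) - (f₀ xp + f j xp + Sp) := by
    apply le_of_forall_pos_le_add
    intro ε hε
    set D : ℝ := ‖xp - xstar‖ ^ 2 with hD
    have hD0 : 0 ≤ D := by positivity
    set c : ℝ := μ / 2 * D with hc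
    have hc0 : 0 ≤ c := by positivity
    set θ : ℝ := min 1 (ε / (c + 1)) with hθ
    have hθ0 : 0 < θ := lt_min one_pos (by positivity)
    have hθ1 : θ ≤ 1 := min_le_left _ _
    have hθc : θ * c ≤ ε := by
      have h1 : θ ≤ ε / (c + 1) := min_le_right _ _
      have h2 : θ * c ≤ (ε / (c + 1)) * c := mul_le_mul_of_nonneg_right h1 hc0
      have h3 : (ε / (c + 1)) * c ≤ ε := by
        rw [div_mul_eq_mul_div, div_le_iff₀ (by linarith)]
        nlinarith
      linarith
    set y : EuclideanSpace ℝ (Fin p) := θ • xstar + (1 - θ) • xp with hy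
    -- convexity inequalities at y
    have h1 := hf₀.2 (Set.mem_univ xstar) (Set.mem_univ xp) hθ0.le
      (by linarith : (0:ℝ) ≤ 1 - θ) (by ring)
    have h2 := (hf j).2 (Set.mem_univ xstar) (Set.mem_univ xp) hθ0.le
      (by linarith : (0:ℝ) ≤ 1 - θ) (by ring)
    simp only [smul_eq_mul] at h1 h2
    -- the linearized part is affine
    have h3 : (∑ i ∈ Finset.univ.erase j, (f i (xa i) + ⟪g i, y - xa i⟫)) =
        θ * Ss + (1 - θ) * Sp := by
      rw [hSs, hSp, Finset.mul_sum, Finset.mul_sum, ← Finset.sum_add_distrib]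
      refine Finset.sum_congr rfl fun i _ => ?_
      have : ⟪g i, y - xa i⟫ = θ * ⟪g i, xstar - xa i⟫ + (1 - θ) * ⟪g i, xp - xa i⟫ := by
        simp only [hy, inner_sub_right, inner_add_right, inner_smul_right]
        ring
      rw [this]; ring
    -- norm identity
    have hnorm : ‖y‖ ^ 2 = θ * ‖xstar‖ ^ 2 + (1 - θ) * ‖xp‖ ^ 2 - θ * (1 - θ) * D := by
      have e1 : ‖y‖ ^ 2 = ⟪y, y⟫ := (real_inner_self_eq_norm_sq y).symm
      have e2 : ‖xstar‖ ^ 2 = ⟪xstar, xstar⟫ := (real_inner_self_eq_norm_sq xstar).symm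
      have e3 : ‖xp‖ ^ 2 = ⟪xp, xp⟫ := (real_inner_self_eq_norm_sq xp).symm
      have e4 : D = ⟪xp - xstar, xp - xstar⟫ := (real_inner_self_eq_norm_sq _).symm
      rw [e1, e2, e3, e4]
      simp only [hy, inner_add_left, inner_add_right, inner_smul_left, inner_smul_right,
        inner_sub_left, inner_sub_right, RCLike.conj_to_real, real_inner_comm xp xstar]
      ring
    -- minimality of xp for the surrogate
    have hmin := hxp y
    rw [h3] at hmin
    -- combine to get θ * (φ(xp) + μ/2 (1-θ) D) ≤ θ * φ(xstar)
    have hup : f₀ y + f j y + (θ * Ss + (1 - θ) * Sp) ≤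
        θ * (f₀ xstar + f j xstar + Ss) + (1 - θ) * (f₀ xp + f j xp + Sp)
          - μ / 2 * (θ * (1 - θ)) * D := by
      have : f₀ y ≤ θ * f₀ xstar + (1 - θ) * f₀ xp - μ / 2 * (θ * (1 - θ)) * D := by
        nlinarith [h1, hnorm]
      nlinarith [h2]
    have h' : θ * (f₀ xp + f j xp + Sp + μ / 2 * (1 - θ) * D) ≤
        θ * (f₀ xstar + f j xstar + Ss) := by nlinarith [hmin, hup]
    have hkey := le_of_mul_le_mul_left h' hθ0
    have hiden : μ / 2 * D = μ / 2 * (1 - θ) * D + θ * c := by rw [hc]; ring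
    linarith
  linarith
end
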